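/- arXiv:2106.09877 — 3 statements merged into one kernel-verified Lean document; each statement's English description precedes it below -/
import Mathlib

section
/- Conversely, if A ∈ ℂ^(n×n) has rank r and G ∈ ℂ^(n×n) is such that there exists an invertible X with A G = X diag(I_r, 0) X⁻¹, then G is a generalized inverse of A. -/
theorem diagonalizable_proj_is_gen_inv {n : ℕ}
    (A G X : Matrix (Fin n) (Fin n) ℂ)
    (hX : IsUnit X)
    (hAG : A * G =
      X * Matrix.diagonal (fun i : Fin n => if (i : ℕ) < A.rank then (1 : ℂ) else 0) * X⁻¹) :
    A * G * A = A := by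
  set D : Matrix (Fin n) (Fin n) ℂ :=
    Matrix.diagonal (fun i : Fin n => if (i : ℕ) < A.rank then (1 : ℂ) else 0) with hD
  have hXdet : IsUnit X.det := (Matrix.isUnit_iff_isUnit_det X).mp hX
  have hXinvdet : IsUnit X⁻¹.det := X.isUnit_nonsing_inv_det hXdet
  have hrle : A.rank ≤ n := by simpa using A.rank_le_card_width
  -- rank of D equals rank of A
  have hDrank : D.rank = A.rank := by
    rw [hD, Matrix.rank_diagonal]
    have e : {i : Fin n // (if (i : ℕ) < A.rank then (1 : ℂ) else 0) ≠ 0} ≃ Fin A.rank :=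
      { toFun := fun x => ⟨x.1, by
          by_contra h
          exact x.2 (if_neg (by omega))⟩
        invFun := fun j => ⟨⟨j.1, lt_of_lt_of_le j.2 hrle⟩, by simp [j.2]⟩
        left_inv := fun x => by ext; rfl
        right_inv := fun j => rfl }
    rw [Fintype.card_congr e, Fintype.card_fin]
  -- rank of A*G equals rank A
  have hPrank : (A * G).rank = A.rank := by
    rw [hAG, mul_assoc, Matrix.rank_mul_eq_right_of_isUnit_det X (D * X⁻¹) hXdet,
      Matrix.rank_mul_eq_left_of_isUnit_det X⁻¹ D hXinvdet, hDrank]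
  -- D is idempotent
  have hDidem : D * D = D := by
    rw [hD, Matrix.diagonal_mul_diagonal]
    exact congrArg Matrix.diagonal (funext fun i => by split <;> simp)
  -- A*G is idempotent
  have hPidem : (A * G) * (A * G) = A * G := by
    rw [hAG]
    calc X * D * X⁻¹ * (X * D * X⁻¹) = X * D * (X⁻¹ * X) * D * X⁻¹ := by
          noncomm_ring
      _ = X * (D * D) * X⁻¹ := by
          rw [Matrix.nonsing_inv_mul X hXdet]; noncomm_ring
      _ = X * D * X⁻¹ := by rw [hDidem]
  -- ranges
  have hle : LinearMap.range (A * G).mulVecLin ≤ LinearMap.range A.mulVecLin := by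
    rw [Matrix.mulVecLin_mul]
    exact LinearMap.range_comp_le_range _ _
  have hrange : LinearMap.range (A * G).mulVecLin = LinearMap.range A.mulVecLin := by
    apply Submodule.eq_of_le_of_finrank_eq hle
    exact hPrank
  -- conclude
  have key : ∀ v : Fin n → ℂ, (A * G).mulVecLin (A.mulVecLin v) = A.mulVecLin v := by
    intro v
    have hmem : A.mulVecLin v ∈ LinearMap.range (A * G).mulVecLin := by
      rw [hrange]; exact ⟨v, rfl⟩
    obtain ⟨u, hu⟩ := hmem
    have h2 := congrArg (fun M : Matrix (Fin n) (Fin n) ℂ => M.mulVecLin u) hPidem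
    rw [← hu]
    simpa only [Matrix.mulVecLin_mul, LinearMap.comp_apply] using h2
  have hfun : (A * G * A).mulVecLin = A.mulVecLin := by
    apply LinearMap.ext
    intro v
    have h2 := congrArg (fun M : Matrix (Fin n) (Fin n) ℂ => M.mulVecLin v) (rfl : A * G * A = A * G * A)
    calc (A * G * A).mulVecLin v = (A * G).mulVecLin (A.mulVecLin v) := by
          simp [Matrix.mulVecLin_mul]
      _ = A.mulVecLin v := key v
  ext i j
  have h2 := congrFun (congrArg (fun f : (Fin n → ℂ) →ₗ[ℂ] (Fin n → ℂ) => f (Pi.single j 1)) hfun) i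
  have h3 : (A * G).mulVec (A.col j) i = A i j := by
    simpa [Matrix.mulVecLin_apply, Matrix.mulVec_single] using h2
  exact h3
end

section
/- With the block factorization A = L diag(I_{n1}, S) Ū as above and S^g a generalized inverse of S with S S^g = Q̂ Q̂^H for some matrix Q̂ with orthonormal columns, the product A G (with G = Ū⁻¹ diag(I_{n1}, S^g) L⁻¹) satisfies A G = X diag(I_{n1+s}, 0) X⁻¹ up to simultaneous permutation, where X = L diag(I_{n1}, Q) for a unitary Q extending Q̂ and s = rank(S). -/
open Matrix

/-- With `A = L * diag(I, S) * Ū` and `Sg` a generalized inverse of `S` such that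
`S * Sg = Q * diag(I_s, 0) * Qᴴ` for a unitary `Q` (i.e. `S * Sg = Q̂ * Q̂ᴴ` with `Q̂` the first
`s` columns of `Q`), the matrix `A * G` with `G = Ū⁻¹ * diag(I, Sg) * L⁻¹` satisfies
`A * G = X * diag(I_{n1+s}, 0) * X⁻¹` where `X = L * diag(I, Q)` and `s = rank S`. -/
theorem hybrid_factorization_proj_similarity {n1 n2 s : ℕ}
    (L₁ : Matrix (Fin n1) (Fin n1) ℂ) (L₂ : Matrix (Fin n2) (Fin n1) ℂ)
    (U₁ : Matrix (Fin n1) (Fin n1) ℂ) (U₂ : Matrix (Fin n1) (Fin n2) ℂ)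
    (S Sg Q : Matrix (Fin n2) (Fin n2) ℂ)
    (A G : Matrix (Fin n1 ⊕ Fin n2) (Fin n1 ⊕ Fin n2) ℂ)
    (hL : IsUnit (Matrix.fromBlocks L₁ (0 : Matrix (Fin n1) (Fin n2) ℂ) L₂ (1 : Matrix (Fin n2) (Fin n2) ℂ)))
    (hU : IsUnit (Matrix.fromBlocks U₁ U₂ (0 : Matrix (Fin n2) (Fin n1) ℂ) (1 : Matrix (Fin n2) (Fin n2) ℂ)))
    (hs : S.rank = s)
    (hQ : Qᴴ * Q = 1)
    (hSg : S * Sg * S = S)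
    (hSSg : S * Sg =
      Q * Matrix.diagonal (fun j : Fin n2 => if (j : ℕ) < s then (1 : ℂ) else 0) * Qᴴ)
    (hA : A = Matrix.fromBlocks L₁ (0 : Matrix (Fin n1) (Fin n2) ℂ) L₂ (1 : Matrix (Fin n2) (Fin n2) ℂ) * Matrix.fromBlocks (1 : Matrix (Fin n1) (Fin n1) ℂ) 0 0 S *
      Matrix.fromBlocks U₁ U₂ (0 : Matrix (Fin n2) (Fin n1) ℂ) (1 : Matrix (Fin n2) (Fin n2) ℂ))
    (hG : G = (Matrix.fromBlocks U₁ U₂ (0 : Matrix (Fin n2) (Fin n1) ℂ) (1 : Matrix (Fin n2) (Fin n2) ℂ))⁻¹ * Matrix.fromBlocks (1 : Matrix (Fin n1) (Fin n1) ℂ) 0 0 Sg *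
      (Matrix.fromBlocks L₁ (0 : Matrix (Fin n1) (Fin n2) ℂ) L₂ (1 : Matrix (Fin n2) (Fin n2) ℂ))⁻¹) :
    A * G =
      (Matrix.fromBlocks L₁ (0 : Matrix (Fin n1) (Fin n2) ℂ) L₂ (1 : Matrix (Fin n2) (Fin n2) ℂ) * Matrix.fromBlocks (1 : Matrix (Fin n1) (Fin n1) ℂ) 0 0 Q) *
        Matrix.fromBlocks (1 : Matrix (Fin n1) (Fin n1) ℂ) 0 0
          (Matrix.diagonal (fun j : Fin n2 => if (j : ℕ) < s then (1 : ℂ) else 0)) *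
      (Matrix.fromBlocks L₁ (0 : Matrix (Fin n1) (Fin n2) ℂ) L₂ (1 : Matrix (Fin n2) (Fin n2) ℂ) * Matrix.fromBlocks (1 : Matrix (Fin n1) (Fin n1) ℂ) 0 0 Q)⁻¹ := by
  set LM := Matrix.fromBlocks L₁ (0 : Matrix (Fin n1) (Fin n2) ℂ) L₂ (1 : Matrix (Fin n2) (Fin n2) ℂ) with hLM
  set UM := Matrix.fromBlocks U₁ U₂ (0 : Matrix (Fin n2) (Fin n1) ℂ) (1 : Matrix (Fin n2) (Fin n2) ℂ) with hUM
  set D := Matrix.diagonal (fun j : Fin n2 => if (j : ℕ) < s then (1 : ℂ) else 0) with hD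
  have hQunit : IsUnit Q := by
    have : IsUnit Q.det := by
      have := congrArg Matrix.det hQ
      rw [Matrix.det_mul, Matrix.det_one] at this
      exact IsUnit.of_mul_eq_one _ (mul_comm Qᴴ.det Q.det ▸ this)
    exact (Matrix.isUnit_iff_isUnit_det Q).2 this
  have hQinv : Q⁻¹ = Qᴴ := Matrix.inv_eq_left_inv hQ
  have hQB : IsUnit (Matrix.fromBlocks (1 : Matrix (Fin n1) (Fin n1) ℂ) 0 0 Q) := by
    rw [Matrix.isUnit_iff_isUnit_det, Matrix.det_fromBlocks_zero₂₁]
    simpa using (Matrix.isUnit_iff_isUnit_det Q).1 hQunit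
  have hQBinv : (Matrix.fromBlocks (1 : Matrix (Fin n1) (Fin n1) ℂ) 0 0 Q)⁻¹ =
      Matrix.fromBlocks (1 : Matrix (Fin n1) (Fin n1) ℂ) 0 0 Qᴴ := by
    apply Matrix.inv_eq_left_inv
    simp [Matrix.fromBlocks_multiply, hQ]
  have hUunit : UM * UM⁻¹ = 1 :=
    Matrix.mul_nonsing_inv _ ((Matrix.isUnit_iff_isUnit_det _).1 hU)
  calc A * G = LM * (Matrix.fromBlocks (1 : Matrix (Fin n1) (Fin n1) ℂ) 0 0 S *
        (UM * UM⁻¹) * Matrix.fromBlocks (1 : Matrix (Fin n1) (Fin n1) ℂ) 0 0 Sg) * LM⁻¹ := by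
        rw [hA, hG]; simp only [mul_assoc]
    _ = LM * Matrix.fromBlocks (1 : Matrix (Fin n1) (Fin n1) ℂ) 0 0 (S * Sg) * LM⁻¹ := by
        rw [hUunit, mul_one, Matrix.fromBlocks_multiply]; simp
    _ = LM * (Matrix.fromBlocks (1 : Matrix (Fin n1) (Fin n1) ℂ) 0 0 Q * Matrix.fromBlocks
          (1 : Matrix (Fin n1) (Fin n1) ℂ) 0 0 D * Matrix.fromBlocks (1 : Matrix (Fin n1) (Fin n1) ℂ) 0 0 Qᴴ) * LM⁻¹ := by
        rw [hSSg]; simp [Matrix.fromBlocks_multiply]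
    _ = (LM * Matrix.fromBlocks (1 : Matrix (Fin n1) (Fin n1) ℂ) 0 0 Q) * Matrix.fromBlocks
          (1 : Matrix (Fin n1) (Fin n1) ℂ) 0 0 D *
        (LM * Matrix.fromBlocks (1 : Matrix (Fin n1) (Fin n1) ℂ) 0 0 Q)⁻¹ := by
        rw [Matrix.mul_inv_rev, hQBinv]; simp only [mul_assoc]
end

section
/- Let A ∈ ℂ^(n×n) of rank r and A^g a generalized inverse, with A A^g = X diag(I_r, 0) X⁻¹. Then the nonzero singular values of A A^g satisfy σ_max(A A^g)/σ_min⁺(A A^g) ≤ κ(X), where σ_min⁺ denotes the smallest nonzero singular value and κ(X) = ‖X‖₂ ‖X⁻¹‖₂. -/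
open scoped Matrix.Norms.L2Operator

/-- The generalized 2-norm condition number of `A * Ag` is bounded by `κ(X) = ‖X‖₂ ‖X⁻¹‖₂`:
for all vectors `v` and all `u` orthogonal to the kernel of `A * Ag`,
`‖(A*Ag) v‖ / ‖v‖ ≤ κ(X) * ‖(A*Ag) u‖ / ‖u‖`, i.e. the ratio between the largest and smallest
nonzero singular values of `A * Ag` is at most `κ(X)`. -/
theorem cond_mul_gen_inv_le_cond {n : ℕ}
    (A Ag X : Matrix (Fin n) (Fin n) ℂ)
    (h : A * Ag * A = A)
    (hX : IsUnit X)
    (hAG : A * Ag =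
      X * Matrix.diagonal (fun i : Fin n => if (i : ℕ) < A.rank then (1 : ℂ) else 0) * X⁻¹) :
    ∀ u v : EuclideanSpace ℂ (Fin n),
      u ∈ (LinearMap.ker (Matrix.toEuclideanLin (A * Ag)))ᗮ →
      ‖Matrix.toEuclideanLin (A * Ag) v‖ * ‖u‖ ≤
        (‖X‖ * ‖X⁻¹‖) * (‖Matrix.toEuclideanLin (A * Ag) u‖ * ‖v‖) := by
  intro u v hu
  set P := A * Ag with hP
  set D := Matrix.diagonal (fun i : Fin n => if (i : ℕ) < A.rank then (1 : ℂ) else 0) with hD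
  -- P is idempotent
  have hP2 : P * P = P := by
    rw [hP, ← mul_assoc (A * Ag) A Ag, h]
  -- D is self-adjoint and idempotent, hence ‖D‖ ≤ 1
  have hDH : D.conjTranspose * D = D := by
    rw [hD]
    rw [Matrix.diagonal_conjTranspose, Matrix.diagonal_mul_diagonal]
    refine congrArg Matrix.diagonal ?_
    funext i
    by_cases hi : (i : ℕ) < A.rank <;> simp [hi]
  have hDnorm : ‖D‖ ≤ 1 := by
    have h1 : ‖D‖ * ‖D‖ = ‖D‖ := by
      rw [← Matrix.l2_opNorm_conjTranspose_mul_self, hDH]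
    by_contra hcon
    push_neg at hcon
    nlinarith [norm_nonneg D]
  -- ‖P‖ ≤ ‖X‖ * ‖X⁻¹‖
  have hPnorm : ‖P‖ ≤ ‖X‖ * ‖X⁻¹‖ := by
    calc ‖P‖ = ‖X * D * X⁻¹‖ := by rw [hAG]
    _ ≤ ‖X * D‖ * ‖X⁻¹‖ := Matrix.l2_opNorm_mul _ _
    _ ≤ (‖X‖ * ‖D‖) * ‖X⁻¹‖ :=
        mul_le_mul_of_nonneg_right (Matrix.l2_opNorm_mul _ _) (norm_nonneg _)
    _ ≤ (‖X‖ * 1) * ‖X⁻¹‖ := by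
        have := mul_le_mul_of_nonneg_left hDnorm (norm_nonneg X)
        exact mul_le_mul_of_nonneg_right this (norm_nonneg _)
    _ = ‖X‖ * ‖X⁻¹‖ := by ring
  set T := Matrix.toEuclideanLin P with hT
  have hTc : ∀ x : EuclideanSpace ℂ (Fin n), T x = Matrix.toEuclideanCLM (𝕜 := ℂ) P x := by
    intro x
    rw [hT, ← Matrix.coe_toEuclideanCLM_eq_toEuclideanLin]
    rfl
  -- ‖T x‖ ≤ ‖P‖ * ‖x‖
  have hTle : ∀ x : EuclideanSpace ℂ (Fin n), ‖T x‖ ≤ ‖P‖ * ‖x‖ := by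
    intro x
    rw [hTc]
    exact (Matrix.toEuclideanCLM (𝕜 := ℂ) P).le_opNorm x
  -- T is idempotent
  have hCLM : Matrix.toEuclideanCLM (𝕜 := ℂ) P * Matrix.toEuclideanCLM (𝕜 := ℂ) P =
      Matrix.toEuclideanCLM (𝕜 := ℂ) P := by
    rw [← map_mul, hP2]
  have hT2 : ∀ x, T (T x) = T x := by
    intro x
    rw [hTc (T x), hTc x]
    calc Matrix.toEuclideanCLM (𝕜 := ℂ) P (Matrix.toEuclideanCLM (𝕜 := ℂ) P x)
        = (Matrix.toEuclideanCLM (𝕜 := ℂ) P * Matrix.toEuclideanCLM (𝕜 := ℂ) P) x := rfl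
    _ = Matrix.toEuclideanCLM (𝕜 := ℂ) P x := by rw [hCLM]
  -- u - T u ∈ ker T
  have hker : u - T u ∈ LinearMap.ker T := by
    simp only [LinearMap.mem_ker, map_sub]
    rw [hT2]
    simp
  -- ‖u‖ ≤ ‖T u‖
  have huTu : ‖u‖ ≤ ‖T u‖ := by
    have horth : inner ℂ (u - T u) u = (0 : ℂ) :=
      (Submodule.mem_orthogonal _ u).mp hu _ hker
    have : (inner ℂ u u : ℂ) = inner ℂ (T u) u := by
      have h' : (inner ℂ u u : ℂ) - inner ℂ (T u) u = 0 := by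
        rw [← inner_sub_left]; exact horth
      exact sub_eq_zero.mp h'
    have hn : ‖u‖ * ‖u‖ ≤ ‖T u‖ * ‖u‖ := by
      calc ‖u‖ * ‖u‖ = ‖(inner ℂ u u : ℂ)‖ := by
            rw [inner_self_eq_norm_sq_to_K]
            simp [sq, norm_mul]
      _ = ‖(inner ℂ (T u) u : ℂ)‖ := by rw [this]
      _ ≤ ‖T u‖ * ‖u‖ := norm_inner_le_norm _ _
    rcases eq_or_lt_of_le (norm_nonneg u) with h0 | h0
    · rw [← h0]; exact norm_nonneg _
    · exact le_of_mul_le_mul_right hn h0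
  -- combine
  have h1 : ‖T v‖ ≤ (‖X‖ * ‖X⁻¹‖) * ‖v‖ :=
    le_trans (hTle v) (mul_le_mul_of_nonneg_right hPnorm (norm_nonneg _))
  calc ‖T v‖ * ‖u‖ ≤ ((‖X‖ * ‖X⁻¹‖) * ‖v‖) * ‖T u‖ :=
        mul_le_mul h1 huTu (norm_nonneg _)
          (mul_nonneg (mul_nonneg (norm_nonneg _) (norm_nonneg _)) (norm_nonneg _))
  _ = (‖X‖ * ‖X⁻¹‖) * (‖T u‖ * ‖v‖) := by ring
end
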